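/- Let G be a linearly ordered torsion-free abelian group in which every subset bounded below is well-ordered. Then for every strictly increasing sequence (g_i)_{i∈ℕ₀} in G there exists a strictly increasing sequence of indices (n_i)_{i∈ℕ₀} such that the sequence of differences (g_{n_{i+1}} − g_{n_i})_{i∈ℕ₀} is strictly increasing. -/

import Mathlib

/-- In a linearly ordered abelian group in which every bounded-below subset is well-ordered,
every strictly increasing sequence admits a strictly increasing subsequence of indices along
which the consecutive differences are strictly increasing. -/
theorem exists_subsequence_strictMono_differences
    {G : Type*} [AddCommGroup G] [LinearOrder G] [IsOrderedAddMonoid G]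
    (hwo : ∀ A : Set G, BddBelow A → A.IsWF)
    (g : ℕ → G) (hg : StrictMono g) :
    ∃ n : ℕ → ℕ, StrictMono n ∧ StrictMono (fun i : ℕ => g (n (i + 1)) - g (n i)) := by
  have key : ∀ m : ℕ, ∀ d : G, ∃ k, m < k ∧ d < g k - g m := by
    intro m d
    by_contra h
    push_neg at h
    set A : Set G := {x | ∃ k, m < k ∧ x = g m + d - g k} with hA
    have hne : A.Nonempty := ⟨g m + d - g (m+1), m+1, Nat.lt_succ_self m, rfl⟩
    have hbdd : BddBelow A := by
      refine ⟨0, ?_⟩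
      rintro x ⟨k, hk, rfl⟩
      have h1 : g k ≤ g m + d := by
        have := h k hk
        rwa [sub_le_iff_le_add, add_comm] at this
      exact sub_nonneg.mpr h1
    have hwf := hwo A hbdd
    obtain ⟨k0, hk0, heq⟩ := hwf.min_mem hne
    have hlt : g m + d - g (k0+1) < hwf.min hne := by
      rw [heq]
      exact sub_lt_sub_left (hg (Nat.lt_succ_self k0)) _
    exact hwf.not_lt_min hne ⟨k0+1, by omega, rfl⟩ hlt
  choose f hf1 hf2 using key
  set F : ℕ × ℕ → ℕ × ℕ := fun q => (q.2, f q.2 (g q.2 - g q.1)) with hF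
  set p : ℕ → ℕ × ℕ := fun i => F^[i] (0, f 0 0) with hp
  have hstep : ∀ i, p (i+1) = F (p i) := fun i => Function.iterate_succ_apply' F i _
  have hlt : ∀ i, (p i).1 < (p i).2 := by
    intro i
    induction i with
    | zero => exact hf1 0 0
    | succ i ih => rw [hstep]; exact hf1 _ _
  refine ⟨fun i => (p i).1, ?_, ?_⟩
  · apply strictMono_nat_of_lt_succ
    intro i
    have := hlt i
    rw [hstep]
    exact this
  · apply strictMono_nat_of_lt_succ
    intro i
    simp only
    have h1 : (p (i+1)).1 = (p i).2 := by rw [hstep]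
    have h2 : (p (i+1+1)).1 = (p (i+1)).2 := by rw [hstep (i+1)]
    have h3 : (p (i+1)).2 = f (p i).2 (g (p i).2 - g (p i).1) := by rw [hstep]
    rw [h1, h2, h3]
    exact hf2 _ _
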